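/- Integrality of the symmetric quantum 6j-symbol: for all nonnegative half-integers a,b,c,d,e,f such that the triples (a,b,c), (a,e,f), (d,b,f), (d,e,c) are admissible, the renormalized 6j-symbol Tet(a,b,c,d,e,f) is a Laurent polynomial in q with integer coefficients, i.e. Tet(a,b,c,d,e,f) ∈ ℤ[q, q^{−1}]. -/

import Mathlib

noncomputable section
open scoped Classical

namespace QSpin

/-- The ambient field: rational functions over `ℂ` (which contains `ℚ(i)`),
in a variable `X` which represents the formal fourth root `q^(1/4)`. -/
abbrev K : Type := RatFunc ℂ

/-- `X` represents `q^(1/4)`. -/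
def X : K := RatFunc.X

/-- The quantum variable `q = X^4`. -/
def q : K := X ^ 4

/-- `i = √-1`, as a constant of `K`. -/
def ii : K := RatFunc.C Complex.I

/-- `q` raised to a rational power `r` (meaningful whenever `4 * r ∈ ℤ`). -/
def qpow (r : ℚ) : K := X ^ (4 * r).num

/-- Half of an integer, as a rational number: a half-integer is encoded by its double. -/
def hf (n : ℤ) : ℚ := (n : ℚ) / 2

/-- Integer powers of `i`. -/
def ipow (n : ℤ) : K := ii ^ n

/-- Integer powers of `-1`. -/
def m1pow (n : ℤ) : K := (-1 : K) ^ n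

/-- The quantum integer `[n] = (q^n - q^(-n))/(q - q⁻¹)`. -/
def qint (n : ℤ) : K := (q ^ n - q ^ (-n)) / (q - q⁻¹)

/-- The quantum factorial `[n]!`. -/
def qfact (n : ℕ) : K := ∏ j ∈ Finset.range n, qint (j + 1)

/-- The quantum factorial of an integer (zero for negative arguments). -/
def qfactz (n : ℤ) : K := if 0 ≤ n then qfact n.toNat else 0

/-- The quantum binomial `[n choose k]`, vanishing unless `0 ≤ k ≤ n`. -/
def qbin (n k : ℤ) : K :=
  if 0 ≤ k ∧ k ≤ n then qfactz n / (qfactz k * qfactz (n - k)) else 0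

/-- Admissibility of a triple of half-integers (encoded by their doubles):
all nonnegative, total sum an integer (i.e. the sum of the doubles is even), and
the triangular inequalities hold. -/
def Adm (a b c : ℤ) : Prop :=
  0 ≤ a ∧ 0 ≤ b ∧ 0 ≤ c ∧ 2 ∣ (a + b + c) ∧ c ≤ a + b ∧ a ≤ b + c ∧ b ≤ c + a

/-- The quantum Clebsch-Gordan coefficient `C^{a,b,c}_{u,v,t}`; all six half-integer
parameters are encoded by their doubles. -/
def CG (a b c u v t : ℤ) : K :=
  if u + v = t then
    ipow ((c - a - b) / 2) * m1pow ((b - v) / 2 - (c - t) / 2) *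
      qpow ((hf b - hf v) * (hf b + hf v + 1) / 2 - (hf a - hf u) * (hf a + hf u + 1) / 2) *
      (qfactz ((a + b - c) / 2) * qfactz ((b + c - a) / 2) * qfactz ((c + a - b) / 2) /
        qfactz c) *
      ∑ z ∈ Finset.range (((c - t) / 2).toNat + 1),
        m1pow z *
          qpow (((z : ℚ) - (((c - t) / 2 - (z : ℤ) : ℤ) : ℚ)) * (hf c + hf t + 1) / 2) *
          qbin ((a + u) / 2 + z) ((a + c - b) / 2) *
          qbin ((b + v) / 2 + ((c - t) / 2 - (z : ℤ))) ((b + c - a) / 2) *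
          qbin ((c - t) / 2) z
  else 0

/-- The coefficient `W^{a,b,c}_{u,v,t} = C^{a,b,c}_{u,v,-t} · i^{-2t} q^{-t} · [2c]!`. -/
def W (a b c u v t : ℤ) : K := CG a b c u v (-t) * ipow (-t) * qpow (-(hf t)) * qfactz c

/-- The coefficient `P^{a,b,c}_{u,v,t} = C^{a,c,b}_{-u,t,v} · i^{2u} q^{u} / [2a]!`. -/
def Pc (a b c u v t : ℤ) : K := CG a c b (-u) t v * ipow u * qpow (hf u) / qfactz a

/-- The coefficient `M^{a,b,c}_{u,v,t} = P^{a,b,c}_{u,v,-t} · i^{-2t} q^{-t} / [2c]!`. -/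
def M (a b c u v t : ℤ) : K := Pc a b c u v (-t) * ipow (-t) * qpow (-(hf t)) / qfactz c


/-- The renormalized unknot value `O(a) = (−1)^{2a}[2a+1]`
(the half-integer `a` is encoded by its double). -/
def O (a : ℤ) : K := m1pow a * qint (a + 1)

/-- The renormalized theta value
`Θ(a,b,c) = (−1)^{a+b+c}[a+b+c+1]·[a+b+c; a+b−c, b+c−a, c+a−b]`
(half-integers encoded by their doubles). -/
def Th (a b c : ℤ) : K :=
  m1pow ((a + b + c) / 2) * qint ((a + b + c) / 2 + 1) *
    (qfactz ((a + b + c) / 2) /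
      (qfactz ((a + b - c) / 2) * qfactz ((b + c - a) / 2) * qfactz ((c + a - b) / 2)))

/-- The renormalized 6j-symbol (tetrahedron)
`Tet(a,b,c,d,e,f) = Σ_{z=max Tᵢ}^{min Qⱼ} (−1)^z [z+1] ·
[z; z−T₁, z−T₂, z−T₃, z−T₄, Q₁−z, Q₂−z, Q₃−z]`
(half-integers encoded by their doubles). -/
def Tet (a b c d e f : ℤ) : K :=
  (let T1 := (a + b + c) / 2; let T2 := (a + e + f) / 2;
   let T3 := (d + b + f) / 2; let T4 := (d + e + c) / 2;
   let Q1 := (a + b + d + e) / 2; let Q2 := (a + c + d + f) / 2;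
   let Q3 := (b + c + e + f) / 2;
   ∑ z ∈ Finset.Icc (max (max T1 T2) (max T3 T4)) (min (min Q1 Q2) Q3),
     m1pow z * qint (z + 1) *
       (qfactz z /
         (qfactz (z - T1) * qfactz (z - T2) * qfactz (z - T3) * qfactz (z - T4) *
           qfactz (Q1 - z) * qfactz (Q2 - z) * qfactz (Q3 - z))))


/-! ### Auxiliary lemmas for integrality -/

lemma Xpow_ne_one' (k : ℕ) (hk : 0 < k) : (X:K)^k ≠ 1 := by
  intro h
  have h2 : algebraMap (Polynomial ℂ) K (Polynomial.X ^ k) = algebraMap (Polynomial ℂ) K 1 := by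
    simpa [X, map_pow] using h
  have h3 := (RatFunc.algebraMap_injective ℂ).eq_iff.mp h2
  have := congrArg Polynomial.natDegree h3
  simp [Polynomial.natDegree_X_pow] at this
  omega

lemma X_ne_zero' : (X:K) ≠ 0 := by
  simpa [X] using RatFunc.X_ne_zero

lemma q_ne_zero : (q:K) ≠ 0 := pow_ne_zero _ X_ne_zero'

lemma qpow_ne_one (k : ℕ) (hk : 0 < k) : (q:K)^k ≠ 1 := by
  rw [q, ← pow_mul]; exact Xpow_ne_one' _ (by omega)

lemma denom_ne_zero : (q:K) - q⁻¹ ≠ 0 := by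
  rw [sub_ne_zero]
  intro h
  have h2 : (q:K)^2 = 1 := by
    rw [pow_two]; nth_rewrite 2 [h]; exact mul_inv_cancel₀ q_ne_zero
  exact qpow_ne_one 2 (by norm_num) h2

lemma qint_ne_zero (n : ℕ) (hn : 0 < n) : qint n ≠ 0 := by
  unfold qint
  apply div_ne_zero _ denom_ne_zero
  rw [sub_ne_zero]
  intro h
  have h2 : (q:K)^((n:ℤ)+n) = 1 := by
    rw [zpow_add₀ q_ne_zero]; nth_rewrite 2 [h]
    rw [← zpow_add₀ q_ne_zero]; simp
  have h3 : (q:K)^(2*n) = 1 := by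
    rw [← zpow_natCast]; push_cast; rw [two_mul]; exact h2
  exact qpow_ne_one _ (by omega) h3

lemma qfact_ne_zero (n : ℕ) : qfact n ≠ 0 := by
  unfold qfact
  apply Finset.prod_ne_zero_iff.mpr
  intro j _
  exact_mod_cast qint_ne_zero (j+1) (by omega)

lemma qint_add (m k : ℤ) : qint (m + k) = q^k * qint m + q^(-m) * qint k := by
  unfold qint
  have hA : (q:K)^m ≠ 0 := zpow_ne_zero _ q_ne_zero
  have hB : (q:K)^k ≠ 0 := zpow_ne_zero _ q_ne_zero
  have hq := q_ne_zero
  have hd := denom_ne_zero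
  rw [zpow_add₀ q_ne_zero, neg_add, zpow_add₀ q_ne_zero, zpow_neg, zpow_neg,
    mul_div_assoc', mul_div_assoc', ← add_div, div_eq_div_iff hd hd]
  field_simp
  ring

/-- The target subring `ℤ[q, q⁻¹]`. -/
def R : Subring K := Subring.closure ({q, q⁻¹} : Set K)

lemma q_mem : (q:K) ∈ R := Subring.subset_closure (by simp)
lemma qinv_mem : (q⁻¹:K) ∈ R := Subring.subset_closure (by simp)

lemma qzpow_mem (n : ℤ) : (q:K)^n ∈ R := by
  rcases le_or_gt 0 n with h | h
  · lift n to ℕ using h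
    rw [zpow_natCast]; exact pow_mem q_mem _
  · have : (q:K)^n = (q⁻¹)^(-n).toNat := by
      rw [inv_pow, ← zpow_natCast, Int.toNat_of_nonneg (by omega), zpow_neg, inv_inv]
    rw [this]; exact pow_mem qinv_mem _

lemma m1_zpow_mem (n : ℤ) : ((-1 : K))^n ∈ R := by
  rcases Int.even_or_odd n with h | h
  · rw [h.neg_one_zpow]; exact one_mem R
  · rw [h.neg_one_zpow]; exact neg_mem (one_mem R)

lemma qint_one : qint 1 = 1 := by
  unfold qint
  rw [zpow_one, zpow_neg, zpow_one, div_self denom_ne_zero]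

lemma qint_mem (n : ℕ) : qint n ∈ R := by
  induction n with
  | zero => simp only [Nat.cast_zero, qint, neg_zero, zpow_zero, sub_self, zero_div]; exact zero_mem R
  | succ k ih =>
    push_cast
    rw [qint_add k 1, qint_one]
    exact add_mem (mul_mem (qzpow_mem 1) ih) (mul_mem (qzpow_mem (-k)) (one_mem R))

lemma qfact_succ (n : ℕ) : qfact (n+1) = qfact n * qint (n+1) := by
  unfold qfact
  rw [Finset.prod_range_succ]

lemma qbin_mem : ∀ n a b : ℕ, a + b ≤ n → qfact (a+b) / (qfact a * qfact b) ∈ R := by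
  intro n
  induction n with
  | zero =>
    intro a b h
    have ha : a = 0 := by omega
    have hb : b = 0 := by omega
    subst ha hb
    simpa [qfact] using one_mem R
  | succ m ih =>
    intro a b h
    match a, b with
    | 0, b =>
      rw [Nat.zero_add, show qfact 0 = 1 from by simp [qfact], one_mul,
        div_self (qfact_ne_zero b)]
      exact one_mem R
    | a+1, 0 =>
      rw [Nat.add_zero, show qfact 0 = 1 from by simp [qfact], mul_one,
        div_self (qfact_ne_zero (a+1))]
      exact one_mem R
    | a+1, b+1 =>
      have key : qfact (a+1+(b+1)) / (qfact (a+1) * qfact (b+1)) =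
          q^((b:ℤ)+1) * (qfact (a+(b+1)) / (qfact a * qfact (b+1))) +
          q^(-((a:ℤ)+1)) * (qfact (a+1+b) / (qfact (a+1) * qfact b)) := by
        have e1 : a+1+(b+1) = (a+b+1)+1 := by omega
        have e2 : a+(b+1) = a+b+1 := by omega
        have e3 : a+1+b = a+b+1 := by omega
        rw [e1, e2, e3, qfact_succ (a+b+1), qfact_succ a, qfact_succ b]
        have hiq : qint ((a:ℤ)+(b:ℤ)+2) =
            q^((b:ℤ)+1) * qint ((a:ℤ)+1) + q^(-((a:ℤ)+1)) * qint ((b:ℤ)+1) := by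
          have := qint_add ((a:ℤ)+1) ((b:ℤ)+1)
          rw [show (a:ℤ)+1+((b:ℤ)+1) = (a:ℤ)+(b:ℤ)+2 by ring] at this
          exact this
        have c1 : ((a+b+1:ℕ):ℤ)+1 = (a:ℤ)+(b:ℤ)+2 := by push_cast; ring
        rw [c1, hiq]
        have h1 := qfact_ne_zero (a+b+1)
        have h2 := qfact_ne_zero a
        have h3 := qfact_ne_zero b
        have h4 : qint ((a:ℤ)+1) ≠ 0 := by
          have := qfact_ne_zero (a+1)
          rw [qfact_succ] at this
          intro hz; rw [show ((a:ℕ):ℤ)+1 = (a:ℤ)+1 from rfl] at this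
          exact this (by rw [hz, mul_zero])
        have h5 : qint ((b:ℤ)+1) ≠ 0 := by
          have := qfact_ne_zero (b+1)
          rw [qfact_succ] at this
          intro hz
          exact this (by rw [show ((b:ℕ):ℤ)+1 = (b:ℤ)+1 from rfl, hz, mul_zero])
        field_simp
      rw [key]
      exact add_mem
        (mul_mem (qzpow_mem _) (ih a (b+1) (by omega)))
        (mul_mem (qzpow_mem _) (ih (a+1) b (by omega)))

lemma listprod_ne_zero : ∀ l : List ℕ, ((l.map qfact).prod : K) ≠ 0
  | [] => by simp
  | a :: l => by
    rw [List.map_cons, List.prod_cons]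
    exact mul_ne_zero (qfact_ne_zero a) (listprod_ne_zero l)

lemma mult_list : ∀ l : List ℕ, qfact l.sum / (l.map qfact).prod ∈ R
  | [] => by
    simp only [List.sum_nil, List.map_nil, List.prod_nil, div_one]
    rw [show qfact 0 = 1 from by simp [qfact]]
    exact one_mem R
  | a :: l => by
    rw [List.map_cons, List.prod_cons, List.sum_cons]
    have h1 := qfact_ne_zero a
    have h2 := qfact_ne_zero l.sum
    have h3 := listprod_ne_zero l
    have key : qfact (a + l.sum) / (qfact a * (l.map qfact).prod) =
        (qfact (a + l.sum) / (qfact a * qfact l.sum)) *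
        (qfact l.sum / (l.map qfact).prod) := by
      field_simp
    rw [key]
    exact mul_mem (qbin_mem _ a l.sum le_rfl) (mult_list l)

lemma mult7 (n1 n2 n3 n4 n5 n6 n7 : ℕ) :
    qfact (n1+n2+n3+n4+n5+n6+n7) /
      (qfact n1 * qfact n2 * qfact n3 * qfact n4 * qfact n5 * qfact n6 * qfact n7) ∈ R := by
  have h := mult_list [n1, n2, n3, n4, n5, n6, n7]
  simp only [List.sum_cons, List.map_cons, List.map_nil, List.sum_nil, List.prod_cons,
    List.prod_nil, add_zero, mul_one] at h
  convert h using 2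
  · congr 1; omega
  · ring

lemma qfactz_of_nonneg {n : ℤ} (h : 0 ≤ n) : qfactz n = qfact n.toNat := by
  simp [qfactz, h]

/-- Integrality of the symmetric quantum 6j-symbol: for nonnegative
half-integers `a,b,c,d,e,f` (encoded by doubles) with `(a,b,c)`, `(a,e,f)`, `(d,b,f)`,
`(d,e,c)` admissible, `Tet(a,b,c,d,e,f)` is a Laurent polynomial in `q` with integer
coefficients, i.e. it lies in the subring `ℤ[q, q⁻¹]` of `K`. -/
theorem tet_integral (a b c d e f : ℤ)
    (h1 : Adm a b c) (h2 : Adm a e f) (h3 : Adm d b f) (h4 : Adm d e c) :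
    Tet a b c d e f ∈ Subring.closure ({q, q⁻¹} : Set K) := by
  obtain ⟨ha, hb, hc, hd1, -, -, -⟩ := h1
  obtain ⟨-, he, hf, hd2, -, -, -⟩ := h2
  obtain ⟨hd, -, hff, hd3, -, -, -⟩ := h3
  obtain ⟨-, -, -, hd4, -, -, -⟩ := h4
  rw [Tet]
  show _ ∈ R
  refine Subring.sum_mem _ fun z hz => ?_
  rw [Finset.mem_Icc] at hz
  obtain ⟨hzl, hzr⟩ := hz
  simp only [le_max_iff, max_le_iff, min_le_iff, le_min_iff] at hzl hzr
  set T1 := (a + b + c) / 2 with hT1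
  set T2 := (a + e + f) / 2 with hT2
  set T3 := (d + b + f) / 2 with hT3
  set T4 := (d + e + c) / 2 with hT4
  set Q1 := (a + b + d + e) / 2 with hQ1
  set Q2 := (a + c + d + f) / 2 with hQ2
  set Q3 := (b + c + e + f) / 2 with hQ3
  have e1 : 2*T1 = a+b+c := by omega
  have e2 : 2*T2 = a+e+f := by omega
  have e3 : 2*T3 = d+b+f := by omega
  have e4 : 2*T4 = d+e+c := by omega
  have e5 : 2*Q1 = a+b+d+e := by omega
  have e6 : 2*Q2 = a+c+d+f := by omega
  have e7 : 2*Q3 = b+c+e+f := by omega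
  clear_value T1 T2 T3 T4 Q1 Q2 Q3
  clear hT1 hT2 hT3 hT4 hQ1 hQ2 hQ3
  have hz0 : 0 ≤ z := by omega
  have hn1 : 0 ≤ z - T1 := by omega
  have hn2 : 0 ≤ z - T2 := by omega
  have hn3 : 0 ≤ z - T3 := by omega
  have hn4 : 0 ≤ z - T4 := by omega
  have hn5 : 0 ≤ Q1 - z := by omega
  have hn6 : 0 ≤ Q2 - z := by omega
  have hn7 : 0 ≤ Q3 - z := by omega
  have hsum : z.toNat = (z-T1).toNat + (z-T2).toNat + (z-T3).toNat + (z-T4).toNat +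
      (Q1-z).toNat + (Q2-z).toNat + (Q3-z).toNat := by
    zify
    rw [Int.toNat_of_nonneg hz0, Int.toNat_of_nonneg hn1, Int.toNat_of_nonneg hn2,
      Int.toNat_of_nonneg hn3, Int.toNat_of_nonneg hn4, Int.toNat_of_nonneg hn5,
      Int.toNat_of_nonneg hn6, Int.toNat_of_nonneg hn7]
    linarith
  refine mul_mem (mul_mem ?_ ?_) ?_
  · exact m1_zpow_mem z
  · rw [show z + 1 = (((z+1).toNat : ℕ) : ℤ) by omega]
    exact qint_mem _
  · rw [qfactz_of_nonneg hz0, qfactz_of_nonneg hn1, qfactz_of_nonneg hn2,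
      qfactz_of_nonneg hn3, qfactz_of_nonneg hn4, qfactz_of_nonneg hn5,
      qfactz_of_nonneg hn6, qfactz_of_nonneg hn7, hsum]
    exact mult7 _ _ _ _ _ _ _


end QSpin
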